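/- arXiv:0808.1016 — 6 statements merged into one kernel-verified Lean document; each statement's English description precedes it below -/
import Mathlib

section
/- Suppose Med_c > 0 and O ≤ 1 - 2·F_c(0). Then the unique real β* with F_c(β*) = (1 - O)/2 satisfies β* ≥ 0, and β* is the unique median of the mixture CDF F. -/
open Filter Topology Function

/-- The mixture CDF `F(β) = π·1_{β ≥ 0} + (1-π)·F_c(β)`. -/
noncomputable def mixCDF (p : ℝ) (Fc : ℝ → ℝ) (β : ℝ) : ℝ :=
  (if 0 ≤ β then p else 0) + (1 - p) * Fc β

/-- `M` is a median of `F`: `F(M) ≥ 1/2` and the left limit `F(M⁻) ≤ 1/2`. -/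
def IsMedian (F : ℝ → ℝ) (M : ℝ) : Prop :=
  1 / 2 ≤ F M ∧ Function.leftLim F M ≤ 1 / 2

/-- Left limit of the mixture CDF at a positive point. -/
lemma mixCDF_leftLim_pos (p : ℝ) (Fc : ℝ → ℝ) (hFc_cont : Continuous Fc)
    (M : ℝ) (hM : 0 < M) :
    Function.leftLim (mixCDF p Fc) M = p + (1 - p) * Fc M := by
  apply leftLim_eq_of_tendsto
  have h1 : Tendsto (fun x => p + (1 - p) * Fc x) (𝓝[<] M) (𝓝 (p + (1 - p) * Fc M)) :=
    ((continuous_const.add (continuous_const.mul hFc_cont)).tendsto M).mono_left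
      nhdsWithin_le_nhds
  refine h1.congr' ?_
  filter_upwards [Ioo_mem_nhdsLT_of_mem (Set.mem_Ioc.2 ⟨hM, le_refl M⟩)] with x hx
  simp [mixCDF, if_pos hx.1.le]

/-- Left limit of the mixture CDF at zero. -/
lemma mixCDF_leftLim_zero (p : ℝ) (Fc : ℝ → ℝ) (hFc_cont : Continuous Fc) :
    Function.leftLim (mixCDF p Fc) 0 = (1 - p) * Fc 0 := by
  apply leftLim_eq_of_tendsto
  have h1 : Tendsto (fun x => (1 - p) * Fc x) (𝓝[<] (0:ℝ)) (𝓝 ((1 - p) * Fc 0)) :=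
    ((continuous_const.mul hFc_cont).tendsto 0).mono_left nhdsWithin_le_nhds
  refine h1.congr' ?_
  filter_upwards [self_mem_nhdsWithin] with x hx
  simp only [Set.mem_Iio] at hx
  simp [mixCDF, if_neg (not_le.2 hx)]

theorem pos_case_small_odds_unique_median (p : ℝ) (hp0 : 0 ≤ p) (hp1 : p < 1)
    (Fc : ℝ → ℝ) (hFc_cont : Continuous Fc) (hFc_mono : StrictMono Fc)
    (hFc_bot : Tendsto Fc atBot (𝓝 0)) (hFc_top : Tendsto Fc atTop (𝓝 1))
    (medc : ℝ) (hmedc : Fc medc = 1 / 2) (hmedc_pos : 0 < medc)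
    (hO : p / (1 - p) ≤ 1 - 2 * Fc 0)
    (βs : ℝ) (hβs : Fc βs = (1 - p / (1 - p)) / 2) :
    0 ≤ βs ∧ IsMedian (mixCDF p Fc) βs ∧
      ∀ M : ℝ, IsMedian (mixCDF p Fc) M → M = βs := by
  have h1p : (0:ℝ) < 1 - p := by linarith
  have hkey : (1 - p) * Fc βs = (1 - 2 * p) / 2 := by
    rw [hβs]; field_simp; ring
  have hβs_nonneg : 0 ≤ βs := by
    rw [← hFc_mono.le_iff_le]
    rw [hβs]
    have := (div_le_iff₀ h1p).1 hO
    nlinarith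
  have hFβs : mixCDF p Fc βs = 1 / 2 := by
    simp only [mixCDF, if_pos hβs_nonneg, hkey]; ring
  refine ⟨hβs_nonneg, ⟨hFβs.ge, ?_⟩, ?_⟩
  · rcases eq_or_lt_of_le hβs_nonneg with h0 | h0
    · rw [← h0, mixCDF_leftLim_zero p Fc hFc_cont, ← h0] at *
      nlinarith
    · rw [mixCDF_leftLim_pos p Fc hFc_cont βs h0]
      nlinarith
  · intro M hM
    rcases lt_trichotomy M βs with h | h | h
    · exfalso
      have hFM : mixCDF p Fc M < 1 / 2 := by
        have hlt : Fc M < Fc βs := hFc_mono h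
        have : (if 0 ≤ M then p else 0) ≤ p := by split_ifs <;> linarith
        simp only [mixCDF]
        nlinarith
      linarith [hM.1]
    · exact h
    · exfalso
      have hMpos : 0 < M := lt_of_le_of_lt hβs_nonneg h
      have := hM.2
      rw [mixCDF_leftLim_pos p Fc hFc_cont M hMpos] at this
      have hlt : Fc βs < Fc M := hFc_mono h
      nlinarith
end

section
/- Suppose Med_c > 0 and O > 1 - 2·F_c(0). Then F(0) > 1/2 and F(0⁻) ≤ 1/2, so M = 0 is the unique median of the mixture CDF F. -/
open Filter Topology Function

theorem pos_case_large_odds_zero_is_unique_median (p : ℝ) (hp0 : 0 ≤ p) (hp1 : p < 1)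
    (Fc : ℝ → ℝ) (hFc_cont : Continuous Fc) (hFc_mono : StrictMono Fc)
    (hFc_bot : Tendsto Fc atBot (𝓝 0)) (hFc_top : Tendsto Fc atTop (𝓝 1))
    (medc : ℝ) (hmedc : Fc medc = 1 / 2) (hmedc_pos : 0 < medc)
    (hO : 1 - 2 * Fc 0 < p / (1 - p)) :
    1 / 2 < mixCDF p Fc 0 ∧ Function.leftLim (mixCDF p Fc) 0 ≤ 1 / 2 ∧
      IsMedian (mixCDF p Fc) 0 ∧
      ∀ M : ℝ, IsMedian (mixCDF p Fc) M → M = 0 := by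
  have hp' : (0:ℝ) < 1 - p := by linarith
  have hFc0_nonneg : 0 ≤ Fc 0 := by
    refine le_of_tendsto hFc_bot ?_
    filter_upwards [eventually_le_atBot (0:ℝ)] with x hx
    exact hFc_mono.monotone hx
  have hFc0_lt : Fc 0 < 1 / 2 := hmedc ▸ hFc_mono hmedc_pos
  have hmul : (1 - 2 * Fc 0) * (1 - p) < p := (lt_div_iff₀ hp').mp hO
  have hF0 : 1 / 2 < mixCDF p Fc 0 := by
    simp only [mixCDF, if_pos (le_refl (0:ℝ))]
    nlinarith
  have hne : (𝓝[<] (0:ℝ)).NeBot := inferInstance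
  have hll : Function.leftLim (mixCDF p Fc) 0 = (1 - p) * Fc 0 := by
    apply leftLim_eq_of_tendsto
    have base : Tendsto (fun β => (1 - p) * Fc β) (𝓝[<] (0:ℝ)) (𝓝 ((1 - p) * Fc 0)) :=
      ((continuous_const.mul hFc_cont).tendsto 0).mono_left nhdsWithin_le_nhds
    refine base.congr' ?_
    filter_upwards [self_mem_nhdsWithin] with x hx
    simp [mixCDF, not_le.mpr (Set.mem_Iio.mp hx)]
  have hll_le : Function.leftLim (mixCDF p Fc) 0 ≤ 1 / 2 := by
    rw [hll]; nlinarith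
  refine ⟨hF0, hll_le, ⟨le_of_lt hF0, hll_le⟩, ?_⟩
  rintro M ⟨h1, h2⟩
  by_contra hM
  rcases lt_or_gt_of_ne hM with hMlt | hMgt
  · have hFM : mixCDF p Fc M = (1 - p) * Fc M := by
      simp [mixCDF, not_le.mpr hMlt]
    have hFcM : Fc M < Fc 0 := hFc_mono hMlt
    have hFcMnn : 0 ≤ Fc M := by
      refine le_of_tendsto hFc_bot ?_
      filter_upwards [eventually_le_atBot M] with x hx
      exact hFc_mono.monotone hx
    rw [hFM] at h1
    nlinarith
  · have hllM : Function.leftLim (mixCDF p Fc) M = p + (1 - p) * Fc M := by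
      apply leftLim_eq_of_tendsto
      have base : Tendsto (fun β => p + (1 - p) * Fc β) (𝓝[<] M)
          (𝓝 (p + (1 - p) * Fc M)) :=
        (((continuous_const.add (continuous_const.mul hFc_cont))).tendsto M).mono_left
          nhdsWithin_le_nhds
      refine base.congr' ?_
      filter_upwards [Ioo_mem_nhdsLT hMgt] with x hx
      simp [mixCDF, le_of_lt hx.1]
    rw [hllM] at h2
    have hFcM : Fc 0 < Fc M := hFc_mono hMgt
    nlinarith
end

section
/- Suppose Med_c < 0 and O ≤ 2·F_c(0) - 1. Then the unique real β* with F_c(β*) = (1 + O)/2 satisfies β* ≤ 0, and β* is the unique median of the mixture CDF F. -/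
open Filter Topology Function

lemma leftLim_mix_nonpos (p : ℝ) (Fc : ℝ → ℝ) (hFc_cont : Continuous Fc)
    (M : ℝ) (hM : M ≤ 0) : leftLim (mixCDF p Fc) M = (1 - p) * Fc M := by
  apply leftLim_eq_of_tendsto
  have h : Tendsto (fun x => (1 - p) * Fc x) (𝓝[<] M) (𝓝 ((1 - p) * Fc M)) :=
    ((continuous_const.mul hFc_cont).tendsto M).mono_left nhdsWithin_le_nhds
  apply h.congr'
  filter_upwards [self_mem_nhdsWithin] with x hx
  have : ¬ (0 ≤ x) := by simp at hx ⊢; linarith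
  simp [mixCDF, this]

lemma leftLim_mix_pos (p : ℝ) (Fc : ℝ → ℝ) (hFc_cont : Continuous Fc)
    (M : ℝ) (hM : 0 < M) : leftLim (mixCDF p Fc) M = p + (1 - p) * Fc M := by
  apply leftLim_eq_of_tendsto
  have h : Tendsto (fun x => p + (1 - p) * Fc x) (𝓝[<] M) (𝓝 (p + (1 - p) * Fc M)) :=
    ((continuous_const.add (continuous_const.mul hFc_cont)).tendsto M).mono_left
      nhdsWithin_le_nhds
  apply h.congr'
  filter_upwards [Ioo_mem_nhdsLT_of_mem (Set.mem_Ioc.2 ⟨hM, le_refl M⟩)] with x hx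
  simp [mixCDF, le_of_lt hx.1]

theorem neg_case_small_odds_unique_median (p : ℝ) (hp0 : 0 ≤ p) (hp1 : p < 1)
    (Fc : ℝ → ℝ) (hFc_cont : Continuous Fc) (hFc_mono : StrictMono Fc)
    (hFc_bot : Tendsto Fc atBot (𝓝 0)) (hFc_top : Tendsto Fc atTop (𝓝 1))
    (medc : ℝ) (hmedc : Fc medc = 1 / 2) (hmedc_neg : medc < 0)
    (hO : p / (1 - p) ≤ 2 * Fc 0 - 1)
    (βs : ℝ) (hβs : Fc βs = (1 + p / (1 - p)) / 2) :
    βs ≤ 0 ∧ IsMedian (mixCDF p Fc) βs ∧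
      ∀ M : ℝ, IsMedian (mixCDF p Fc) M → M = βs := by
  have hp1' : 0 < 1 - p := by linarith
  have hval : (1 - p) * Fc βs = 1 / 2 := by
    rw [hβs]; field_simp; ring
  have hβs0 : βs ≤ 0 := by
    have : Fc βs ≤ Fc 0 := by rw [hβs]; linarith
    exact (hFc_mono.le_iff_le).1 this
  have hll : leftLim (mixCDF p Fc) βs = 1 / 2 := by
    rw [leftLim_mix_nonpos p Fc hFc_cont βs hβs0, hval]
  refine ⟨hβs0, ⟨?_, le_of_eq hll⟩, ?_⟩
  · unfold mixCDF
    rcases le_or_gt 0 βs with h | h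
    · rw [if_pos h]; linarith
    · rw [if_neg (not_le.2 h)]; linarith
  · intro M hM
    by_contra hne
    rcases lt_or_gt_of_ne hne with h | h
    · -- M < βs ≤ 0, so F M < 1/2
      have hM0 : ¬ (0 ≤ M) := not_le.2 (lt_of_lt_of_le h hβs0)
      have : mixCDF p Fc M = (1 - p) * Fc M := by simp [mixCDF, hM0]
      have hlt : (1 - p) * Fc M < 1 / 2 := by
        rw [← hval]
        exact mul_lt_mul_of_pos_left (hFc_mono h) hp1'
      have := hM.1
      rw [‹mixCDF p Fc M = _›] at this
      linarith
    · -- βs < M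
      rcases le_or_gt M 0 with hM0 | hM0
      · have := hM.2
        rw [leftLim_mix_nonpos p Fc hFc_cont M hM0] at this
        have hlt : 1 / 2 < (1 - p) * Fc M := by
          rw [← hval]
          exact mul_lt_mul_of_pos_left (hFc_mono h) hp1'
        linarith
      · have := hM.2
        rw [leftLim_mix_pos p Fc hFc_cont M hM0] at this
        have hlt : 1 / 2 < (1 - p) * Fc M := by
          rw [← hval]
          exact mul_lt_mul_of_pos_left (hFc_mono h) hp1'
        linarith
end

section
/- Suppose Med_c < 0 and O > 2·F_c(0) - 1. Then F(0⁻) < 1/2 and F(0) ≥ 1/2, so M = 0 is a median of the mixture CDF F. -/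
open Filter Topology Function

theorem neg_case_large_odds_zero_is_median (p : ℝ) (hp0 : 0 ≤ p) (hp1 : p < 1)
    (Fc : ℝ → ℝ) (hFc_cont : Continuous Fc) (hFc_mono : StrictMono Fc)
    (hFc_bot : Tendsto Fc atBot (𝓝 0)) (hFc_top : Tendsto Fc atTop (𝓝 1))
    (medc : ℝ) (hmedc : Fc medc = 1 / 2) (hmedc_neg : medc < 0)
    (hO : 2 * Fc 0 - 1 < p / (1 - p)) :
    Function.leftLim (mixCDF p Fc) 0 < 1 / 2 ∧ 1 / 2 ≤ mixCDF p Fc 0 ∧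
      IsMedian (mixCDF p Fc) 0 := by
  have h1p : (0:ℝ) < 1 - p := by linarith
  -- left limit equals (1-p) * Fc 0
  have hll : Function.leftLim (mixCDF p Fc) 0 = (1 - p) * Fc 0 := by
    apply leftLim_eq_of_tendsto
    have ht : Tendsto (fun β => (1 - p) * Fc β) (𝓝[<] (0:ℝ)) (𝓝 ((1 - p) * Fc 0)) :=
      ((hFc_cont.tendsto 0).const_mul _).mono_left nhdsWithin_le_nhds
    refine ht.congr' ?_
    filter_upwards [self_mem_nhdsWithin] with x hx
    simp [mixCDF, not_le.2 (show x < 0 from hx)]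
  have hO' : (2 * Fc 0 - 1) * (1 - p) < p := (lt_div_iff₀ h1p).mp hO
  have hlt : (1 - p) * Fc 0 < 1 / 2 := by nlinarith
  have hFc0 : 1 / 2 < Fc 0 := hmedc ▸ hFc_mono hmedc_neg
  have hge : 1 / 2 ≤ mixCDF p Fc 0 := by
    simp only [mixCDF, if_pos le_rfl]
    nlinarith
  exact ⟨hll ▸ hlt, hge, hge, le_of_lt (hll ▸ hlt)⟩
end

section
/- (Lemma 1) Let S = sign(Med_c) ∈ {-1, 0, 1}. If O < |1 - 2·F_c(0)|, then the unique median of the mixture CDF F is the unique real β* with F_c(β*) = (1 - S·O)/2; if O ≥ |1 - 2·F_c(0)|, then 0 is a median of the mixture CDF F. -/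
open Filter Topology Function

section helpers
variable (p : ℝ) (hp0 : 0 ≤ p) (hp1 : p < 1) (Fc : ℝ → ℝ)

lemma mix_mono (hp0 : 0 ≤ p) (hp1 : p < 1) (hFc_mono : StrictMono Fc) :
    StrictMono (mixCDF p Fc) := by
  intro x y hxy
  have h1 : Fc x < Fc y := hFc_mono hxy
  have h1p : (0:ℝ) < 1 - p := by linarith
  have hind : (if (0:ℝ) ≤ x then p else 0) ≤ (if (0:ℝ) ≤ y then p else 0) := by
    split_ifs with h h'
    · exact le_refl _
    · exact absurd (h.trans hxy.le) h'
    · exact hp0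
    · exact le_refl _
  simp only [mixCDF]
  nlinarith

lemma mix_leftLim_neg (hFc_cont : Continuous Fc) {M : ℝ} (hM : M < 0) :
    leftLim (mixCDF p Fc) M = mixCDF p Fc M := by
  have hmem : Set.Iio (0:ℝ) ∈ 𝓝[<] M := mem_nhdsWithin_of_mem_nhds (Iio_mem_nhds hM)
  have heq : ∀ᶠ x in 𝓝[<] M, (fun x => (1 - p) * Fc x) x = mixCDF p Fc x :=
    Filter.eventually_of_mem hmem (fun x hx => by
      simp [mixCDF, not_le.mpr (show x < 0 from hx)])
  have hT : Tendsto (fun x => (1 - p) * Fc x) (𝓝[<] M) (𝓝 ((1 - p) * Fc M)) :=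
    (tendsto_const_nhds.mul (hFc_cont.tendsto M)).mono_left nhdsWithin_le_nhds
  have : leftLim (mixCDF p Fc) M = (1 - p) * Fc M :=
    leftLim_eq_of_tendsto (hT.congr' heq)
  rw [this]
  simp [mixCDF, not_le.mpr hM]

lemma mix_leftLim_pos (hFc_cont : Continuous Fc) {M : ℝ} (hM : 0 < M) :
    leftLim (mixCDF p Fc) M = mixCDF p Fc M := by
  have hmem : Set.Ioo (0:ℝ) M ∈ 𝓝[<] M := Ioo_mem_nhdsLT hM
  have heq : ∀ᶠ x in 𝓝[<] M, (fun x => p + (1 - p) * Fc x) x = mixCDF p Fc x :=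
    Filter.eventually_of_mem hmem (fun x hx => by
      simp [mixCDF, hx.1.le])
  have hT : Tendsto (fun x => p + (1 - p) * Fc x) (𝓝[<] M) (𝓝 (p + (1 - p) * Fc M)) :=
    (tendsto_const_nhds.add (tendsto_const_nhds.mul (hFc_cont.tendsto M))).mono_left
      nhdsWithin_le_nhds
  have : leftLim (mixCDF p Fc) M = p + (1 - p) * Fc M :=
    leftLim_eq_of_tendsto (hT.congr' heq)
  rw [this]
  simp [mixCDF, hM.le]

lemma mix_leftLim_zero (hFc_cont : Continuous Fc) :
    leftLim (mixCDF p Fc) 0 = (1 - p) * Fc 0 := by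
  have heq : ∀ᶠ x in 𝓝[<] (0:ℝ), (fun x => (1 - p) * Fc x) x = mixCDF p Fc x :=
    Filter.eventually_of_mem self_mem_nhdsWithin (fun x hx => by
      simp [mixCDF, not_le.mpr (show x < 0 from hx)])
  have hT : Tendsto (fun x => (1 - p) * Fc x) (𝓝[<] (0:ℝ)) (𝓝 ((1 - p) * Fc 0)) :=
    (tendsto_const_nhds.mul (hFc_cont.tendsto 0)).mono_left nhdsWithin_le_nhds
  exact leftLim_eq_of_tendsto (hT.congr' heq)

lemma med_unique {F : ℝ → ℝ} (hF : StrictMono F) {βs : ℝ} (h : F βs = 1/2)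
    {M : ℝ} (hM : IsMedian F M) : M = βs := by
  rcases lt_trichotomy M βs with hlt | he | hgt
  · have : F M < 1/2 := h ▸ hF hlt
    linarith [hM.1]
  · exact he
  · have h1 : F ((M + βs)/2) ≤ leftLim F M := hF.monotone.le_leftLim (by linarith)
    have h2 : F βs < F ((M + βs)/2) := hF (by linarith)
    linarith [hM.2]

end helpers

theorem lemma_one (p : ℝ) (hp0 : 0 ≤ p) (hp1 : p < 1)
    (Fc : ℝ → ℝ) (hFc_cont : Continuous Fc) (hFc_mono : StrictMono Fc)
    (hFc_bot : Tendsto Fc atBot (𝓝 0)) (hFc_top : Tendsto Fc atTop (𝓝 1))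
    (medc : ℝ) (hmedc : Fc medc = 1 / 2) :
    (p / (1 - p) < |1 - 2 * Fc 0| →
      ∀ βs : ℝ, Fc βs = (1 - Real.sign medc * (p / (1 - p))) / 2 →
        IsMedian (mixCDF p Fc) βs ∧
        ∀ M : ℝ, IsMedian (mixCDF p Fc) M → M = βs) ∧
    (|1 - 2 * Fc 0| ≤ p / (1 - p) → IsMedian (mixCDF p Fc) 0) := by
  have h1p : (0:ℝ) < 1 - p := by linarith
  have hO0 : 0 ≤ p / (1 - p) := div_nonneg hp0 h1p.le
  have hFm : StrictMono (mixCDF p Fc) := mix_mono p Fc hp0 hp1 hFc_mono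
  constructor
  · intro hlt βs hβs
    rcases lt_trichotomy (Fc 0) (1/2) with hc | hc | hc
    · -- medc > 0, sign = 1
      have hmpos : 0 < medc := hFc_mono.lt_iff_lt.mp (by rw [hmedc]; exact hc)
      rw [Real.sign_of_pos hmpos, one_mul] at hβs
      have habs : |1 - 2 * Fc 0| = 1 - 2 * Fc 0 := abs_of_pos (by linarith)
      rw [habs] at hlt
      have hβpos : 0 < βs := by
        apply hFc_mono.lt_iff_lt.mp
        rw [hβs]
        have := (div_lt_iff₀ h1p).mp hlt
        nlinarith
      have hFβ : mixCDF p Fc βs = 1/2 := by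
        simp only [mixCDF, if_pos hβpos.le, hβs]
        field_simp
        ring
      have hmed : IsMedian (mixCDF p Fc) βs :=
        ⟨hFβ.ge, (mix_leftLim_pos p Fc hFc_cont hβpos).le.trans hFβ.le⟩
      exact ⟨hmed, fun M hM => med_unique hFm hFβ hM⟩
    · -- Fc 0 = 1/2: contradiction since O < 0
      exfalso
      rw [show (1 : ℝ) - 2 * Fc 0 = 0 by rw [hc]; ring, abs_zero] at hlt
      linarith
    · -- medc < 0, sign = -1
      have hmneg : medc < 0 := hFc_mono.lt_iff_lt.mp (by rw [hmedc]; exact hc)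
      rw [Real.sign_of_neg hmneg] at hβs
      have habs : |1 - 2 * Fc 0| = 2 * Fc 0 - 1 := by
        rw [abs_of_neg (by linarith)]; ring
      rw [habs] at hlt
      have hβneg : βs < 0 := by
        apply hFc_mono.lt_iff_lt.mp
        rw [hβs]
        have := (div_lt_iff₀ h1p).mp hlt
        nlinarith
      have hFβ : mixCDF p Fc βs = 1/2 := by
        simp only [mixCDF, if_neg (not_le.mpr hβneg), hβs]
        field_simp
        ring
      have hmed : IsMedian (mixCDF p Fc) βs :=
        ⟨hFβ.ge, (mix_leftLim_neg p Fc hFc_cont hβneg).le.trans hFβ.le⟩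
      exact ⟨hmed, fun M hM => med_unique hFm hFβ hM⟩
  · intro hle
    obtain ⟨h1, h2⟩ := abs_le.mp hle
    have h1' : (1 - 2 * Fc 0) * (1 - p) ≤ p := by
      have := (le_div_iff₀ h1p).mp h2
      linarith
    have h2' : -p ≤ (1 - 2 * Fc 0) * (1 - p) := by
      have := (le_div_iff₀ h1p).mp (neg_le.mp h1)
      nlinarith
    constructor
    · simp only [mixCDF, if_pos (le_refl (0:ℝ))]
      nlinarith
    · rw [mix_leftLim_zero p Fc hFc_cont]
      nlinarith
end

section
/- (Location-scale form, equation (2.8), positive case) Suppose F_c(β) = G((β - m)/σ) where σ > 0, m > 0, and G : ℝ → ℝ is a continuous, strictly increasing CDF satisfying the symmetry G(-x) = 1 - G(x) for all x (so G(0) = 1/2 and Med_c = m). If O < |1 - 2·F_c(0)|, then the unique median of the mixture CDF F equals m - σ·G^{-1}((1 + O)/2), where G^{-1}((1+O)/2) is the unique x with G(x) = (1+O)/2. -/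
open Filter Topology Function

theorem location_scale_median_pos_case (p : ℝ) (hp0 : 0 ≤ p) (hp1 : p < 1)
    (Fc : ℝ → ℝ) (hFc_cont : Continuous Fc) (hFc_mono : StrictMono Fc)
    (hFc_bot : Tendsto Fc atBot (𝓝 0)) (hFc_top : Tendsto Fc atTop (𝓝 1))
    (G : ℝ → ℝ) (hG_cont : Continuous G) (hG_mono : StrictMono G)
    (hG_bot : Tendsto G atBot (𝓝 0)) (hG_top : Tendsto G atTop (𝓝 1))
    (hG_sym : ∀ x : ℝ, G (-x) = 1 - G x)
    (m σ : ℝ) (hσ : 0 < σ)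
    (hFc : ∀ β : ℝ, Fc β = G ((β - m) / σ)) (hm : 0 < m)
    (hO : p / (1 - p) < |1 - 2 * Fc 0|) :
    ∃ x : ℝ, G x = (1 + p / (1 - p)) / 2 ∧
      IsMedian (mixCDF p Fc) (m - σ * x) ∧
      ∀ M : ℝ, IsMedian (mixCDF p Fc) M → M = m - σ * x := by
  have h1p : (0:ℝ) < 1 - p := by linarith
  set O : ℝ := p / (1 - p) with hOdef
  have hO0 : 0 ≤ O := div_nonneg hp0 h1p.le
  set t : ℝ := (1 + O) / 2 with htdef
  have ht0 : 0 < t := by positivity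
  -- G 0 = 1/2
  have hG0 : G 0 = 1 / 2 := by
    have := hG_sym 0
    rw [neg_zero] at this
    linarith
  have hGhalf : 1 / 2 < G (m / σ) := by
    rw [← hG0]; exact hG_mono (by positivity)
  -- Fc 0 = 1 - G (m/σ)
  have hFc0 : Fc 0 = 1 - G (m / σ) := by
    rw [hFc 0]
    have : (0 - m) / σ = -(m / σ) := by ring
    rw [this, hG_sym]
  have hO' : O < 2 * G (m / σ) - 1 := by
    rwa [hFc0, show 1 - 2 * (1 - G (m/σ)) = 2 * G (m/σ) - 1 by ring,
      abs_of_pos (by linarith)] at hO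
  have ht1 : t < G (m / σ) := by rw [htdef]; linarith
  -- find x with G x = t by IVT
  obtain ⟨a, ha⟩ : ∃ a, G a < t := by
    have := (hG_bot.eventually (gt_mem_nhds ht0)).exists
    obtain ⟨a, ha⟩ := this; exact ⟨a, ha⟩
  have hab : a ≤ m / σ := le_of_lt (hG_mono.lt_iff_lt.mp (lt_trans ha ht1))
  obtain ⟨x, hx_mem, hx⟩ : ∃ x ∈ Set.Icc a (m / σ), G x = t := by
    have := intermediate_value_Icc hab hG_cont.continuousOn
    have ht_mem : t ∈ Set.Icc (G a) (G (m / σ)) := ⟨ha.le, ht1.le⟩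
    obtain ⟨x, hx1, hx2⟩ := this ht_mem
    exact ⟨x, hx1, hx2⟩
  have hxlt : x < m / σ := by
    rcases lt_or_eq_of_le hx_mem.2 with h | h
    · exact h
    · exfalso; rw [h] at hx; linarith [hx ▸ ht1]
  set M : ℝ := m - σ * x with hMdef
  have hM0 : 0 < M := by
    have : σ * x < m := by
      have := (mul_lt_mul_iff_right₀ hσ).mpr hxlt
      rwa [mul_div_cancel₀ _ (ne_of_gt hσ)] at this
    simp [hMdef]; linarith
  -- Fc M = 1 - t
  have hFcM : Fc M = 1 - t := by
    rw [hFc M]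
    have : (M - m) / σ = -x := by
      rw [hMdef]; field_simp; ring
    rw [this, hG_sym, hx]
  -- value of F at M
  have hFM : mixCDF p Fc M = 1 / 2 := by
    rw [mixCDF, if_pos hM0.le, hFcM, htdef, hOdef]
    field_simp
    ring
  -- Monotone F
  have hmono : StrictMono (mixCDF p Fc) := by
    intro u v huv
    unfold mixCDF
    have h1 : (if 0 ≤ u then p else 0) ≤ (if 0 ≤ v then p else 0) := by
      by_cases hu : 0 ≤ u
      · rw [if_pos hu, if_pos (le_of_lt (lt_of_le_of_lt hu huv))]
      · rw [if_neg hu]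
        by_cases hv : 0 ≤ v
        · rw [if_pos hv]; exact hp0
        · rw [if_neg hv]
    have h2 : (1 - p) * Fc u < (1 - p) * Fc v :=
      (mul_lt_mul_iff_right₀ h1p).mpr (hFc_mono huv)
    linarith
  -- left limit at M equals F M (continuity from the left at M > 0)
  have hleft : leftLim (mixCDF p Fc) M = mixCDF p Fc M := by
    apply leftLim_eq_of_tendsto
    have hcont : Tendsto (fun β => p + (1 - p) * Fc β) (𝓝[<] M) (𝓝 (p + (1 - p) * Fc M)) :=
      ((continuous_const.add (continuous_const.mul hFc_cont)).tendsto M).mono_left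
        nhdsWithin_le_nhds
    have heq : ∀ᶠ β in 𝓝[<] M, (fun β => p + (1 - p) * Fc β) β = mixCDF p Fc β := by
      filter_upwards [nhdsWithin_le_nhds (Ioi_mem_nhds hM0)] with β hβ
      simp [mixCDF, if_pos (le_of_lt (Set.mem_Ioi.mp hβ))]
    have : mixCDF p Fc M = p + (1 - p) * Fc M := by
      rw [mixCDF, if_pos hM0.le]
    rw [this]
    exact hcont.congr' heq
  have hmed : IsMedian (mixCDF p Fc) M := by
    constructor
    · rw [hFM]
    · rw [hleft, hFM]
  refine ⟨x, hx, hmed, ?_⟩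
  intro M' hM'
  by_contra hne
  rcases lt_or_gt_of_ne hne with h | h
  · -- M' < M : F M' < F M = 1/2, contradicts F M' ≥ 1/2
    have := hmono h
    rw [hFM] at this
    linarith [hM'.1]
  · -- M < M' : leftLim F M' ≥ F mid > 1/2
    set mid := (M + M') / 2 with hmid
    have h1 : M < mid := by rw [hmid]; linarith
    have h2 : mid < M' := by rw [hmid]; linarith
    have hFmid : 1 / 2 < mixCDF p Fc mid := by rw [← hFM]; exact hmono h1
    have := hmono.monotone.le_leftLim h2
    linarith [hM'.2]
end
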